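/- Pascal's theorem. Let Γ be a circle with center O and radius r > 0 in the Euclidean plane, and let A, B, C, D, E, F be six pairwise distinct points on Γ. Suppose P lies on both line AB and line DE with line AB ≠ line DE, Q lies on both line BC and line EF with line BC ≠ line EF, and R lies on both line CD and line FA with line CD ≠ line FA. Then P, Q, R are collinear. -/

import Mathlib

noncomputable section


/-- Coordinates of a point on a sphere in the Euclidean plane. -/
theorem sphere_coord (O X : EuclideanSpace ℝ (Fin 2)) (r : ℝ) (h : X ∈ Metric.sphere O r) :
    (X 0 - O 0)^2 + (X 1 - O 1)^2 = r^2 := by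
  have h' : dist X O = r := h
  rw [EuclideanSpace.dist_eq] at h'
  have h2 : ∑ i : Fin 2, dist (X i) (O i) ^ 2 = r^2 := by
    rw [← h']
    exact (Real.sq_sqrt (Finset.sum_nonneg fun i _ => sq_nonneg _)).symm
  simpa [Fin.sum_univ_two, Real.dist_eq, sq_abs] using h2

/-- Membership of the affine span of two points, in coordinates. -/
theorem line_param {A B P : EuclideanSpace ℝ (Fin 2)} (h : P ∈ affineSpan ℝ {A, B}) :
    ∃ t : ℝ, P 0 - A 0 = t * (B 0 - A 0) ∧ P 1 - A 1 = t * (B 1 - A 1) := by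
  rw [show P = (P -ᵥ A) +ᵥ A from (vsub_vadd P A).symm] at h
  obtain ⟨t, ht⟩ := vadd_left_mem_affineSpan_pair.mp h
  simp only [vsub_eq_sub] at ht
  refine ⟨t, ?_, ?_⟩
  · have h0 := congrArg (fun v : EuclideanSpace ℝ (Fin 2) => v 0) ht
    simpa [PiLp.smul_apply, PiLp.sub_apply] using h0.symm
  · have h1 := congrArg (fun v : EuclideanSpace ℝ (Fin 2) => v 1) ht
    simpa [PiLp.smul_apply, PiLp.sub_apply] using h1.symm

/-- Two plane vectors with vanishing determinant are dependent. -/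
theorem dep_of_det {v w : EuclideanSpace ℝ (Fin 2)} (hv : v ≠ 0)
    (h : v 0 * w 1 - v 1 * w 0 = 0) : ∃ k : ℝ, w = k • v := by
  rcases eq_or_ne (v 0) 0 with h0 | h0
  · have h1 : v 1 ≠ 0 := by
      intro h1'
      apply hv
      ext i
      fin_cases i
      · show v 0 = (0 : EuclideanSpace ℝ (Fin 2)) 0
        simpa using h0
      · show v 1 = (0 : EuclideanSpace ℝ (Fin 2)) 1
        simpa using h1'
    have hw0 : w 0 = 0 := by
      have hz : v 1 * w 0 = 0 := by linear_combination w 1 * h0 - h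
      rcases mul_eq_zero.mp hz with h' | h'
      · exact absurd h' h1
      · exact h'
    refine ⟨w 1 / v 1, ?_⟩
    ext i
    fin_cases i
    · show w 0 = ((w 1 / v 1) • v) 0
      simp only [PiLp.smul_apply, smul_eq_mul, h0, hw0, mul_zero]
    · show w 1 = ((w 1 / v 1) • v) 1
      simp only [PiLp.smul_apply, smul_eq_mul]
      field_simp
  · refine ⟨w 0 / v 0, ?_⟩
    ext i
    fin_cases i
    · show w 0 = ((w 0 / v 0) • v) 0
      simp only [PiLp.smul_apply, smul_eq_mul]
      field_simp
    · show w 1 = ((w 0 / v 0) • v) 1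
      simp only [PiLp.smul_apply, smul_eq_mul]
      rw [div_mul_eq_mul_div, eq_div_iff h0]
      linear_combination h

/-- If two chords meet and their direction determinant vanishes, the lines coincide. -/
theorem span_pair_eq {A B D E P : EuclideanSpace ℝ (Fin 2)} (hAB : A ≠ B) (hDE : D ≠ E)
    (h1 : P ∈ affineSpan ℝ {A, B}) (h2 : P ∈ affineSpan ℝ {D, E})
    (hdet : (B 0 - A 0) * (E 1 - D 1) - (B 1 - A 1) * (E 0 - D 0) = 0) :
    affineSpan ℝ {A, B} = affineSpan ℝ {D, E} := by
  rw [show P = (P -ᵥ A) +ᵥ A from (vsub_vadd P A).symm] at h1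
  obtain ⟨t, ht⟩ := vadd_left_mem_affineSpan_pair.mp h1
  rw [show P = (P -ᵥ D) +ᵥ D from (vsub_vadd P D).symm] at h2
  obtain ⟨u, hu⟩ := vadd_left_mem_affineSpan_pair.mp h2
  simp only [vsub_eq_sub] at ht hu
  have hv : B - A ≠ 0 := sub_ne_zero.mpr (Ne.symm hAB)
  have hw : E - D ≠ 0 := sub_ne_zero.mpr (Ne.symm hDE)
  have hdetv : (B - A) 0 * (E - D) 1 - (B - A) 1 * (E - D) 0 = 0 := by
    simpa [PiLp.sub_apply] using hdet
  have hdetw : (E - D) 0 * (B - A) 1 - (E - D) 1 * (B - A) 0 = 0 := by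
    linear_combination -hdetv
  obtain ⟨k, hk⟩ := dep_of_det hv hdetv
  obtain ⟨k', hk'⟩ := dep_of_det hw hdetw
  have hD : D = (t - u*k) • (B - A) + A := by
    linear_combination (norm := module) hu - ht - u • hk
  have hE : E = (t - u*k + k) • (B - A) + A := by
    linear_combination (norm := module) hu - ht - u • hk + hk
  have hA' : A = (u - t*k') • (E - D) + D := by
    linear_combination (norm := module) ht - hu - t • hk'
  have hB' : B = (u - t*k' + k') • (E - D) + D := by
    linear_combination (norm := module) ht - hu - t • hk' + hk'
  have mD : D ∈ affineSpan ℝ {A, B} := by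
    have h := smul_vsub_vadd_mem_affineSpan_pair (t - u*k) A B
    rwa [vsub_eq_sub, vadd_eq_add, ← hD] at h
  have mE : E ∈ affineSpan ℝ {A, B} := by
    have h := smul_vsub_vadd_mem_affineSpan_pair (t - u*k + k) A B
    rwa [vsub_eq_sub, vadd_eq_add, ← hE] at h
  have mA : A ∈ affineSpan ℝ {D, E} := by
    have h := smul_vsub_vadd_mem_affineSpan_pair (u - t*k') D E
    rwa [vsub_eq_sub, vadd_eq_add, ← hA'] at h
  have mB : B ∈ affineSpan ℝ {D, E} := by
    have h := smul_vsub_vadd_mem_affineSpan_pair (u - t*k' + k') D E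
    rwa [vsub_eq_sub, vadd_eq_add, ← hB'] at h
  refine le_antisymm (affineSpan_le.mpr ?_) (affineSpan_le.mpr ?_)
  · rw [Set.insert_subset_iff, Set.singleton_subset_iff]
    exact ⟨mA, mB⟩
  · rw [Set.insert_subset_iff, Set.singleton_subset_iff]
    exact ⟨mD, mE⟩

set_option maxRecDepth 16000 in
set_option maxHeartbeats 1600000 in
/-- The core bracket identity for six points on a circle centred at the origin. -/
theorem pascal_key (a1 a2 b1 b2 c1 c2 d1 d2 e1 e2 f1 f2 s : ℝ)
    (ha : a1^2 + a2^2 = s) (hb : b1^2 + b2^2 = s) (hc : c1^2 + c2^2 = s)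
    (hd : d1^2 + d2^2 = s) (he : e1^2 + e2^2 = s) (hf : f1^2 + f2^2 = s) :
    (-(e1-d1)*(a1*b2-a2*b1) + (b1-a1)*(d1*e2-d2*e1))*((-(f2-e2)*(b1*c2-b2*c1) + (c2-b2)*(e1*f2-e2*f1))*((d1-c1)*(a2-f2)-(d2-c2)*(a1-f1)) - ((c1-b1)*(f2-e2)-(c2-b2)*(f1-e1))*(-(a2-f2)*(c1*d2-c2*d1) + (d2-c2)*(f1*a2-f2*a1))) - (-(e2-d2)*(a1*b2-a2*b1) + (b2-a2)*(d1*e2-d2*e1))*((-(f1-e1)*(b1*c2-b2*c1) + (c1-b1)*(e1*f2-e2*f1))*((d1-c1)*(a2-f2)-(d2-c2)*(a1-f1)) - ((c1-b1)*(f2-e2)-(c2-b2)*(f1-e1))*(-(a1-f1)*(c1*d2-c2*d1) + (d1-c1)*(f1*a2-f2*a1))) + ((b1-a1)*(e2-d2)-(b2-a2)*(e1-d1))*((-(f1-e1)*(b1*c2-b2*c1) + (c1-b1)*(e1*f2-e2*f1))*(-(a2-f2)*(c1*d2-c2*d1) + (d2-c2)*(f1*a2-f2*a1)) - (-(f2-e2)*(b1*c2-b2*c1)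 + (c2-b2)*(e1*f2-e2*f1))*(-(a1-f1)*(c1*d2-c2*d1) + (d1-c1)*(f1*a2-f2*a1))) = 0 := by
  linear_combination ((-c2*d2^2*e1*f1*f2 + c2*d2^2*e1*e2*f1 + c2*d1*e2^2*f1*f2 - c2*d1*e1*e2*f2^2 - c2*d1*d2*e2^2*f1 + c2*d1*d2*e1*f2^2 + c2^2*d2*e1*f1*f2 - c2^2*d2*e1*e2*f1 - c2^2*d1*e2*f1*f2 + c2^2*d1*e1*e2*f2 + c2^2*d1*d2*e2*f1 - c2^2*d1*d2*e1*f2 - c1*d2*e2^2*f1*f2 + c1*d2*e1*e2*f2^2 + c1*d2^2*e2*f1*f2 - c1*d2^2*e1*e2*f2 - c1*d1*d2*e2*f2^2 + c1*d1*d2*e2^2*f2 + c1*c2*d2*e2^2*f1 - c1*c2*d2*e1*f2^2 - c1*c2*d2^2*e2*f1 + c1*c2*d2^2*e1*f2 + c1*c2*d1*e2*f2^2 - c1*c2*d1*e2^2*f2 + b2*d2^2*e1*f1*f2 - b2*d2^2*e1*e2*f1 - b2*d1*e2^2*f1*f2 + b2*d1*e1*e2*f2^2 + b2*d1*d2*e2^2*f1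 - b2*d1*d2*e1*f2^2 - b2*c2^2*e1*f1*f2 + b2*c2^2*e1*e2*f1 + b2*c2^2*d1*f1*f2 - b2*c2^2*d1*e1*e2 - b2*c2^2*d1*d2*f1 + b2*c2^2*d1*d2*e1 + b2*c1*e2^2*f1*f2 - b2*c1*e1*e2*f2^2 - b2*c1*d2^2*f1*f2 + b2*c1*d2^2*e1*e2 + b2*c1*d1*d2*f2^2 - b2*c1*d1*d2*e2^2 - b2*c1*c2*e2^2*f1 + b2*c1*c2*e1*f2^2 + b2*c1*c2*d2^2*f1 - b2*c1*c2*d2^2*e1 - b2*c1*c2*d1*f2^2 + b2*c1*c2*d1*e2^2 - b2^2*d2*e1*f1*f2 + b2^2*d2*e1*e2*f1 + b2^2*d1*e2*f1*f2 - b2^2*d1*e1*e2*f2 - b2^2*d1*d2*e2*f1 + b2^2*d1*d2*e1*f2 + b2^2*c2*e1*f1*f2 - b2^2*c2*e1*e2*f1 - b2^2*c2*d1*f1*f2 + b2^2*c2*d1*e1*e2 + b2^2*c2*d1*d2*f1 - b2^2*c2*d1*d2*e1 - b2^2*c1*e2*f1*f2 + b2^2*c1*e1*e2*f2 + b2^2*c1*d2*f1*f2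 - b2^2*c1*d2*e1*e2 - b2^2*c1*d1*d2*f2 + b2^2*c1*d1*d2*e2 + b2^2*c1*c2*e2*f1 - b2^2*c1*c2*e1*f2 - b2^2*c1*c2*d2*f1 + b2^2*c1*c2*d2*e1 + b2^2*c1*c2*d1*f2 - b2^2*c1*c2*d1*e2 + b1*d2*e2^2*f1*f2 - b1*d2*e1*e2*f2^2 - b1*d2^2*e2*f1*f2 + b1*d2^2*e1*e2*f2 + b1*d1*d2*e2*f2^2 - b1*d1*d2*e2^2*f2 - b1*c2*e2^2*f1*f2 + b1*c2*e1*e2*f2^2 + b1*c2*d2^2*f1*f2 - b1*c2*d2^2*e1*e2 - b1*c2*d1*d2*f2^2 + b1*c2*d1*d2*e2^2 + b1*c2^2*e2*f1*f2 - b1*c2^2*e1*e2*f2 - b1*c2^2*d2*f1*f2 + b1*c2^2*d2*e1*e2 + b1*c2^2*d1*d2*f2 - b1*c2^2*d1*d2*e2 - b1*c1*c2*e2*f2^2 + b1*c1*c2*e2^2*f2 + b1*c1*c2*d2*f2^2 - b1*c1*c2*d2*e2^2 - b1*c1*c2*d2^2*f2 + b1*c1*c2*d2^2*e2 - b1*b2*d2*e2^2*f1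 + b1*b2*d2*e1*f2^2 + b1*b2*d2^2*e2*f1 - b1*b2*d2^2*e1*f2 - b1*b2*d1*e2*f2^2 + b1*b2*d1*e2^2*f2 + b1*b2*c2*e2^2*f1 - b1*b2*c2*e1*f2^2 - b1*b2*c2*d2^2*f1 + b1*b2*c2*d2^2*e1 + b1*b2*c2*d1*f2^2 - b1*b2*c2*d1*e2^2 - b1*b2*c2^2*e2*f1 + b1*b2*c2^2*e1*f2 + b1*b2*c2^2*d2*f1 - b1*b2*c2^2*d2*e1 - b1*b2*c2^2*d1*f2 + b1*b2*c2^2*d1*e2 + b1*b2*c1*e2*f2^2 - b1*b2*c1*e2^2*f2 - b1*b2*c1*d2*f2^2 + b1*b2*c1*d2*e2^2 + b1*b2*c1*d2^2*f2 - b1*b2*c1*d2^2*e2) * ha +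
    (c2*d2^2*e1*f1*f2 - c2*d2^2*e1*e2*f1 - c2*d1*e2^2*f1*f2 + c2*d1*e1*e2*f2^2 + c2*d1*d2*e2^2*f1 - c2*d1*d2*e1*f2^2 - c2^2*d2*e1*f1*f2 + c2^2*d2*e1*e2*f1 + c2^2*d1*e2*f1*f2 - c2^2*d1*e1*e2*f2 - c2^2*d1*d2*e2*f1 + c2^2*d1*d2*e1*f2 + c1*d2*e2^2*f1*f2 - c1*d2*e1*e2*f2^2 - c1*d2^2*e2*f1*f2 + c1*d2^2*e1*e2*f2 + c1*d1*d2*e2*f2^2 - c1*d1*d2*e2^2*f2 - c1*c2*d2*e2^2*f1 + c1*c2*d2*e1*f2^2 + c1*c2*d2^2*e2*f1 - c1*c2*d2^2*e1*f2 - c1*c2*d1*e2*f2^2 + c1*c2*d1*e2^2*f2 - a2*d2^2*e1*f1*f2 + a2*d2^2*e1*e2*f1 + a2*d1*e2^2*f1*f2 - a2*d1*e1*e2*f2^2 - a2*d1*d2*e2^2*f1 + a2*d1*d2*e1*f2^2 + a2*c2^2*e1*f1*f2 - a2*c2^2*e1*e2*f1 - a2*c2^2*d1*f1*f2 + a2*c2^2*d1*e1*e2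 + a2*c2^2*d1*d2*f1 - a2*c2^2*d1*d2*e1 - a2*c1*e2^2*f1*f2 + a2*c1*e1*e2*f2^2 + a2*c1*d2^2*f1*f2 - a2*c1*d2^2*e1*e2 - a2*c1*d1*d2*f2^2 + a2*c1*d1*d2*e2^2 + a2*c1*c2*e2^2*f1 - a2*c1*c2*e1*f2^2 - a2*c1*c2*d2^2*f1 + a2*c1*c2*d2^2*e1 + a2*c1*c2*d1*f2^2 - a2*c1*c2*d1*e2^2 + a2^2*d2*e1*f1*f2 - a2^2*d2*e1*e2*f1 - a2^2*d1*e2*f1*f2 + a2^2*d1*e1*e2*f2 + a2^2*d1*d2*e2*f1 - a2^2*d1*d2*e1*f2 - a2^2*c2*e1*f1*f2 + a2^2*c2*e1*e2*f1 + a2^2*c2*d1*f1*f2 - a2^2*c2*d1*e1*e2 - a2^2*c2*d1*d2*f1 + a2^2*c2*d1*d2*e1 + a2^2*c1*e2*f1*f2 - a2^2*c1*e1*e2*f2 - a2^2*c1*d2*f1*f2 + a2^2*c1*d2*e1*e2 + a2^2*c1*d1*d2*f2 - a2^2*c1*d1*d2*e2 - a2^2*c1*c2*e2*f1 + a2^2*c1*c2*e1*f2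 + a2^2*c1*c2*d2*f1 - a2^2*c1*c2*d2*e1 - a2^2*c1*c2*d1*f2 + a2^2*c1*c2*d1*e2 - a1*d2*e2^2*f1*f2 + a1*d2*e1*e2*f2^2 + a1*d2^2*e2*f1*f2 - a1*d2^2*e1*e2*f2 - a1*d1*d2*e2*f2^2 + a1*d1*d2*e2^2*f2 + a1*c2*e2^2*f1*f2 - a1*c2*e1*e2*f2^2 - a1*c2*d2^2*f1*f2 + a1*c2*d2^2*e1*e2 + a1*c2*d1*d2*f2^2 - a1*c2*d1*d2*e2^2 - a1*c2^2*e2*f1*f2 + a1*c2^2*e1*e2*f2 + a1*c2^2*d2*f1*f2 - a1*c2^2*d2*e1*e2 - a1*c2^2*d1*d2*f2 + a1*c2^2*d1*d2*e2 + a1*c1*c2*e2*f2^2 - a1*c1*c2*e2^2*f2 - a1*c1*c2*d2*f2^2 + a1*c1*c2*d2*e2^2 + a1*c1*c2*d2^2*f2 - a1*c1*c2*d2^2*e2 + a1*a2*d2*e2^2*f1 - a1*a2*d2*e1*f2^2 - a1*a2*d2^2*e2*f1 + a1*a2*d2^2*e1*f2 + a1*a2*d1*e2*f2^2 - a1*a2*d1*e2^2*f2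 - a1*a2*c2*e2^2*f1 + a1*a2*c2*e1*f2^2 + a1*a2*c2*d2^2*f1 - a1*a2*c2*d2^2*e1 - a1*a2*c2*d1*f2^2 + a1*a2*c2*d1*e2^2 + a1*a2*c2^2*e2*f1 - a1*a2*c2^2*e1*f2 - a1*a2*c2^2*d2*f1 + a1*a2*c2^2*d2*e1 + a1*a2*c2^2*d1*f2 - a1*a2*c2^2*d1*e2 - a1*a2*c1*e2*f2^2 + a1*a2*c1*e2^2*f2 + a1*a2*c1*d2*f2^2 - a1*a2*c1*d2*e2^2 - a1*a2*c1*d2^2*f2 + a1*a2*c1*d2^2*e2) * hb +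
    (-b2*d2^2*e1*f1*f2 + b2*d2^2*e1*e2*f1 + b2*d1*e2^2*f1*f2 - b2*d1*e1*e2*f2^2 - b2*d1*d2*e2^2*f1 + b2*d1*d2*e1*f2^2 + b2^2*d2*e1*f1*f2 - b2^2*d2*e1*e2*f1 - b2^2*d1*e2*f1*f2 + b2^2*d1*e1*e2*f2 + b2^2*d1*d2*e2*f1 - b2^2*d1*d2*e1*f2 - b1*d2*e2^2*f1*f2 + b1*d2*e1*e2*f2^2 + b1*d2^2*e2*f1*f2 - b1*d2^2*e1*e2*f2 - b1*d1*d2*e2*f2^2 + b1*d1*d2*e2^2*f2 + b1*b2*d2*e2^2*f1 - b1*b2*d2*e1*f2^2 - b1*b2*d2^2*e2*f1 + b1*b2*d2^2*e1*f2 + b1*b2*d1*e2*f2^2 - b1*b2*d1*e2^2*f2 + a2*d2^2*e1*f1*f2 - a2*d2^2*e1*e2*f1 - a2*d1*e2^2*f1*f2 + a2*d1*e1*e2*f2^2 + a2*d1*d2*e2^2*f1 - a2*d1*d2*e1*f2^2 - a2*b2^2*e1*f1*f2 + a2*b2^2*e1*e2*f1 + a2*b2^2*d1*f1*f2 - a2*b2^2*d1*e1*e2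 - a2*b2^2*d1*d2*f1 + a2*b2^2*d1*d2*e1 + a2*b1*e2^2*f1*f2 - a2*b1*e1*e2*f2^2 - a2*b1*d2^2*f1*f2 + a2*b1*d2^2*e1*e2 + a2*b1*d1*d2*f2^2 - a2*b1*d1*d2*e2^2 - a2*b1*b2*e2^2*f1 + a2*b1*b2*e1*f2^2 + a2*b1*b2*d2^2*f1 - a2*b1*b2*d2^2*e1 - a2*b1*b2*d1*f2^2 + a2*b1*b2*d1*e2^2 - a2^2*d2*e1*f1*f2 + a2^2*d2*e1*e2*f1 + a2^2*d1*e2*f1*f2 - a2^2*d1*e1*e2*f2 - a2^2*d1*d2*e2*f1 + a2^2*d1*d2*e1*f2 + a2^2*b2*e1*f1*f2 - a2^2*b2*e1*e2*f1 - a2^2*b2*d1*f1*f2 + a2^2*b2*d1*e1*e2 + a2^2*b2*d1*d2*f1 - a2^2*b2*d1*d2*e1 - a2^2*b1*e2*f1*f2 + a2^2*b1*e1*e2*f2 + a2^2*b1*d2*f1*f2 - a2^2*b1*d2*e1*e2 - a2^2*b1*d1*d2*f2 + a2^2*b1*d1*d2*e2 + a2^2*b1*b2*e2*f1 - a2^2*b1*b2*e1*f2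 - a2^2*b1*b2*d2*f1 + a2^2*b1*b2*d2*e1 + a2^2*b1*b2*d1*f2 - a2^2*b1*b2*d1*e2 + a1*d2*e2^2*f1*f2 - a1*d2*e1*e2*f2^2 - a1*d2^2*e2*f1*f2 + a1*d2^2*e1*e2*f2 + a1*d1*d2*e2*f2^2 - a1*d1*d2*e2^2*f2 - a1*b2*e2^2*f1*f2 + a1*b2*e1*e2*f2^2 + a1*b2*d2^2*f1*f2 - a1*b2*d2^2*e1*e2 - a1*b2*d1*d2*f2^2 + a1*b2*d1*d2*e2^2 + a1*b2^2*e2*f1*f2 - a1*b2^2*e1*e2*f2 - a1*b2^2*d2*f1*f2 + a1*b2^2*d2*e1*e2 + a1*b2^2*d1*d2*f2 - a1*b2^2*d1*d2*e2 - a1*b1*b2*e2*f2^2 + a1*b1*b2*e2^2*f2 + a1*b1*b2*d2*f2^2 - a1*b1*b2*d2*e2^2 - a1*b1*b2*d2^2*f2 + a1*b1*b2*d2^2*e2 - a1*a2*d2*e2^2*f1 + a1*a2*d2*e1*f2^2 + a1*a2*d2^2*e2*f1 - a1*a2*d2^2*e1*f2 - a1*a2*d1*e2*f2^2 + a1*a2*d1*e2^2*f2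 + a1*a2*b2*e2^2*f1 - a1*a2*b2*e1*f2^2 - a1*a2*b2*d2^2*f1 + a1*a2*b2*d2^2*e1 + a1*a2*b2*d1*f2^2 - a1*a2*b2*d1*e2^2 - a1*a2*b2^2*e2*f1 + a1*a2*b2^2*e1*f2 + a1*a2*b2^2*d2*f1 - a1*a2*b2^2*d2*e1 - a1*a2*b2^2*d1*f2 + a1*a2*b2^2*d1*e2 + a1*a2*b1*e2*f2^2 - a1*a2*b1*e2^2*f2 - a1*a2*b1*d2*f2^2 + a1*a2*b1*d2*e2^2 + a1*a2*b1*d2^2*f2 - a1*a2*b1*d2^2*e2) * hc +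
    (b2*c2^2*e1*f1*f2 - b2*c2^2*e1*e2*f1 - b2*c1*e2^2*f1*f2 + b2*c1*e1*e2*f2^2 + b2*c1*c2*e2^2*f1 - b2*c1*c2*e1*f2^2 - b2^2*c2*e1*f1*f2 + b2^2*c2*e1*e2*f1 + b2^2*c1*e2*f1*f2 - b2^2*c1*e1*e2*f2 - b2^2*c1*c2*e2*f1 + b2^2*c1*c2*e1*f2 + b1*c2*e2^2*f1*f2 - b1*c2*e1*e2*f2^2 - b1*c2^2*e2*f1*f2 + b1*c2^2*e1*e2*f2 + b1*c1*c2*e2*f2^2 - b1*c1*c2*e2^2*f2 - b1*b2*c2*e2^2*f1 + b1*b2*c2*e1*f2^2 + b1*b2*c2^2*e2*f1 - b1*b2*c2^2*e1*f2 - b1*b2*c1*e2*f2^2 + b1*b2*c1*e2^2*f2 - a2*c2^2*e1*f1*f2 + a2*c2^2*e1*e2*f1 + a2*c1*e2^2*f1*f2 - a2*c1*e1*e2*f2^2 - a2*c1*c2*e2^2*f1 + a2*c1*c2*e1*f2^2 + a2*b2^2*e1*f1*f2 - a2*b2^2*e1*e2*f1 - a2*b2^2*c1*f1*f2 + a2*b2^2*c1*e1*e2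 + a2*b2^2*c1*c2*f1 - a2*b2^2*c1*c2*e1 - a2*b1*e2^2*f1*f2 + a2*b1*e1*e2*f2^2 + a2*b1*c2^2*f1*f2 - a2*b1*c2^2*e1*e2 - a2*b1*c1*c2*f2^2 + a2*b1*c1*c2*e2^2 + a2*b1*b2*e2^2*f1 - a2*b1*b2*e1*f2^2 - a2*b1*b2*c2^2*f1 + a2*b1*b2*c2^2*e1 + a2*b1*b2*c1*f2^2 - a2*b1*b2*c1*e2^2 + a2^2*c2*e1*f1*f2 - a2^2*c2*e1*e2*f1 - a2^2*c1*e2*f1*f2 + a2^2*c1*e1*e2*f2 + a2^2*c1*c2*e2*f1 - a2^2*c1*c2*e1*f2 - a2^2*b2*e1*f1*f2 + a2^2*b2*e1*e2*f1 + a2^2*b2*c1*f1*f2 - a2^2*b2*c1*e1*e2 - a2^2*b2*c1*c2*f1 + a2^2*b2*c1*c2*e1 + a2^2*b1*e2*f1*f2 - a2^2*b1*e1*e2*f2 - a2^2*b1*c2*f1*f2 + a2^2*b1*c2*e1*e2 + a2^2*b1*c1*c2*f2 - a2^2*b1*c1*c2*e2 - a2^2*b1*b2*e2*f1 + a2^2*b1*b2*e1*f2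 + a2^2*b1*b2*c2*f1 - a2^2*b1*b2*c2*e1 - a2^2*b1*b2*c1*f2 + a2^2*b1*b2*c1*e2 - a1*c2*e2^2*f1*f2 + a1*c2*e1*e2*f2^2 + a1*c2^2*e2*f1*f2 - a1*c2^2*e1*e2*f2 - a1*c1*c2*e2*f2^2 + a1*c1*c2*e2^2*f2 + a1*b2*e2^2*f1*f2 - a1*b2*e1*e2*f2^2 - a1*b2*c2^2*f1*f2 + a1*b2*c2^2*e1*e2 + a1*b2*c1*c2*f2^2 - a1*b2*c1*c2*e2^2 - a1*b2^2*e2*f1*f2 + a1*b2^2*e1*e2*f2 + a1*b2^2*c2*f1*f2 - a1*b2^2*c2*e1*e2 - a1*b2^2*c1*c2*f2 + a1*b2^2*c1*c2*e2 + a1*b1*b2*e2*f2^2 - a1*b1*b2*e2^2*f2 - a1*b1*b2*c2*f2^2 + a1*b1*b2*c2*e2^2 + a1*b1*b2*c2^2*f2 - a1*b1*b2*c2^2*e2 + a1*a2*c2*e2^2*f1 - a1*a2*c2*e1*f2^2 - a1*a2*c2^2*e2*f1 + a1*a2*c2^2*e1*f2 + a1*a2*c1*e2*f2^2 - a1*a2*c1*e2^2*f2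 - a1*a2*b2*e2^2*f1 + a1*a2*b2*e1*f2^2 + a1*a2*b2*c2^2*f1 - a1*a2*b2*c2^2*e1 - a1*a2*b2*c1*f2^2 + a1*a2*b2*c1*e2^2 + a1*a2*b2^2*e2*f1 - a1*a2*b2^2*e1*f2 - a1*a2*b2^2*c2*f1 + a1*a2*b2^2*c2*e1 + a1*a2*b2^2*c1*f2 - a1*a2*b2^2*c1*e2 - a1*a2*b1*e2*f2^2 + a1*a2*b1*e2^2*f2 + a1*a2*b1*c2*f2^2 - a1*a2*b1*c2*e2^2 - a1*a2*b1*c2^2*f2 + a1*a2*b1*c2^2*e2) * hd +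
    (-b2*c2^2*d1*f1*f2 + b2*c2^2*d1*d2*f1 + b2*c1*d2^2*f1*f2 - b2*c1*d1*d2*f2^2 - b2*c1*c2*d2^2*f1 + b2*c1*c2*d1*f2^2 + b2^2*c2*d1*f1*f2 - b2^2*c2*d1*d2*f1 - b2^2*c1*d2*f1*f2 + b2^2*c1*d1*d2*f2 + b2^2*c1*c2*d2*f1 - b2^2*c1*c2*d1*f2 - b1*c2*d2^2*f1*f2 + b1*c2*d1*d2*f2^2 + b1*c2^2*d2*f1*f2 - b1*c2^2*d1*d2*f2 - b1*c1*c2*d2*f2^2 + b1*c1*c2*d2^2*f2 + b1*b2*c2*d2^2*f1 - b1*b2*c2*d1*f2^2 - b1*b2*c2^2*d2*f1 + b1*b2*c2^2*d1*f2 + b1*b2*c1*d2*f2^2 - b1*b2*c1*d2^2*f2 + a2*c2^2*d1*f1*f2 - a2*c2^2*d1*d2*f1 - a2*c1*d2^2*f1*f2 + a2*c1*d1*d2*f2^2 + a2*c1*c2*d2^2*f1 - a2*c1*c2*d1*f2^2 - a2*b2^2*d1*f1*f2 + a2*b2^2*d1*d2*f1 + a2*b2^2*c1*f1*f2 - a2*b2^2*c1*d1*d2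 - a2*b2^2*c1*c2*f1 + a2*b2^2*c1*c2*d1 + a2*b1*d2^2*f1*f2 - a2*b1*d1*d2*f2^2 - a2*b1*c2^2*f1*f2 + a2*b1*c2^2*d1*d2 + a2*b1*c1*c2*f2^2 - a2*b1*c1*c2*d2^2 - a2*b1*b2*d2^2*f1 + a2*b1*b2*d1*f2^2 + a2*b1*b2*c2^2*f1 - a2*b1*b2*c2^2*d1 - a2*b1*b2*c1*f2^2 + a2*b1*b2*c1*d2^2 - a2^2*c2*d1*f1*f2 + a2^2*c2*d1*d2*f1 + a2^2*c1*d2*f1*f2 - a2^2*c1*d1*d2*f2 - a2^2*c1*c2*d2*f1 + a2^2*c1*c2*d1*f2 + a2^2*b2*d1*f1*f2 - a2^2*b2*d1*d2*f1 - a2^2*b2*c1*f1*f2 + a2^2*b2*c1*d1*d2 + a2^2*b2*c1*c2*f1 - a2^2*b2*c1*c2*d1 - a2^2*b1*d2*f1*f2 + a2^2*b1*d1*d2*f2 + a2^2*b1*c2*f1*f2 - a2^2*b1*c2*d1*d2 - a2^2*b1*c1*c2*f2 + a2^2*b1*c1*c2*d2 + a2^2*b1*b2*d2*f1 - a2^2*b1*b2*d1*f2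 - a2^2*b1*b2*c2*f1 + a2^2*b1*b2*c2*d1 + a2^2*b1*b2*c1*f2 - a2^2*b1*b2*c1*d2 + a1*c2*d2^2*f1*f2 - a1*c2*d1*d2*f2^2 - a1*c2^2*d2*f1*f2 + a1*c2^2*d1*d2*f2 + a1*c1*c2*d2*f2^2 - a1*c1*c2*d2^2*f2 - a1*b2*d2^2*f1*f2 + a1*b2*d1*d2*f2^2 + a1*b2*c2^2*f1*f2 - a1*b2*c2^2*d1*d2 - a1*b2*c1*c2*f2^2 + a1*b2*c1*c2*d2^2 + a1*b2^2*d2*f1*f2 - a1*b2^2*d1*d2*f2 - a1*b2^2*c2*f1*f2 + a1*b2^2*c2*d1*d2 + a1*b2^2*c1*c2*f2 - a1*b2^2*c1*c2*d2 - a1*b1*b2*d2*f2^2 + a1*b1*b2*d2^2*f2 + a1*b1*b2*c2*f2^2 - a1*b1*b2*c2*d2^2 - a1*b1*b2*c2^2*f2 + a1*b1*b2*c2^2*d2 - a1*a2*c2*d2^2*f1 + a1*a2*c2*d1*f2^2 + a1*a2*c2^2*d2*f1 - a1*a2*c2^2*d1*f2 - a1*a2*c1*d2*f2^2 + a1*a2*c1*d2^2*f2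 + a1*a2*b2*d2^2*f1 - a1*a2*b2*d1*f2^2 - a1*a2*b2*c2^2*f1 + a1*a2*b2*c2^2*d1 + a1*a2*b2*c1*f2^2 - a1*a2*b2*c1*d2^2 - a1*a2*b2^2*d2*f1 + a1*a2*b2^2*d1*f2 + a1*a2*b2^2*c2*f1 - a1*a2*b2^2*c2*d1 - a1*a2*b2^2*c1*f2 + a1*a2*b2^2*c1*d2 + a1*a2*b1*d2*f2^2 - a1*a2*b1*d2^2*f2 - a1*a2*b1*c2*f2^2 + a1*a2*b1*c2*d2^2 + a1*a2*b1*c2^2*f2 - a1*a2*b1*c2^2*d2) * he +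
    (b2*c2^2*d1*e1*e2 - b2*c2^2*d1*d2*e1 - b2*c1*d2^2*e1*e2 + b2*c1*d1*d2*e2^2 + b2*c1*c2*d2^2*e1 - b2*c1*c2*d1*e2^2 - b2^2*c2*d1*e1*e2 + b2^2*c2*d1*d2*e1 + b2^2*c1*d2*e1*e2 - b2^2*c1*d1*d2*e2 - b2^2*c1*c2*d2*e1 + b2^2*c1*c2*d1*e2 + b1*c2*d2^2*e1*e2 - b1*c2*d1*d2*e2^2 - b1*c2^2*d2*e1*e2 + b1*c2^2*d1*d2*e2 + b1*c1*c2*d2*e2^2 - b1*c1*c2*d2^2*e2 - b1*b2*c2*d2^2*e1 + b1*b2*c2*d1*e2^2 + b1*b2*c2^2*d2*e1 - b1*b2*c2^2*d1*e2 - b1*b2*c1*d2*e2^2 + b1*b2*c1*d2^2*e2 - a2*c2^2*d1*e1*e2 + a2*c2^2*d1*d2*e1 + a2*c1*d2^2*e1*e2 - a2*c1*d1*d2*e2^2 - a2*c1*c2*d2^2*e1 + a2*c1*c2*d1*e2^2 + a2*b2^2*d1*e1*e2 - a2*b2^2*d1*d2*e1 - a2*b2^2*c1*e1*e2 + a2*b2^2*c1*d1*d2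 + a2*b2^2*c1*c2*e1 - a2*b2^2*c1*c2*d1 - a2*b1*d2^2*e1*e2 + a2*b1*d1*d2*e2^2 + a2*b1*c2^2*e1*e2 - a2*b1*c2^2*d1*d2 - a2*b1*c1*c2*e2^2 + a2*b1*c1*c2*d2^2 + a2*b1*b2*d2^2*e1 - a2*b1*b2*d1*e2^2 - a2*b1*b2*c2^2*e1 + a2*b1*b2*c2^2*d1 + a2*b1*b2*c1*e2^2 - a2*b1*b2*c1*d2^2 + a2^2*c2*d1*e1*e2 - a2^2*c2*d1*d2*e1 - a2^2*c1*d2*e1*e2 + a2^2*c1*d1*d2*e2 + a2^2*c1*c2*d2*e1 - a2^2*c1*c2*d1*e2 - a2^2*b2*d1*e1*e2 + a2^2*b2*d1*d2*e1 + a2^2*b2*c1*e1*e2 - a2^2*b2*c1*d1*d2 - a2^2*b2*c1*c2*e1 + a2^2*b2*c1*c2*d1 + a2^2*b1*d2*e1*e2 - a2^2*b1*d1*d2*e2 - a2^2*b1*c2*e1*e2 + a2^2*b1*c2*d1*d2 + a2^2*b1*c1*c2*e2 - a2^2*b1*c1*c2*d2 - a2^2*b1*b2*d2*e1 + a2^2*b1*b2*d1*e2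 + a2^2*b1*b2*c2*e1 - a2^2*b1*b2*c2*d1 - a2^2*b1*b2*c1*e2 + a2^2*b1*b2*c1*d2 - a1*c2*d2^2*e1*e2 + a1*c2*d1*d2*e2^2 + a1*c2^2*d2*e1*e2 - a1*c2^2*d1*d2*e2 - a1*c1*c2*d2*e2^2 + a1*c1*c2*d2^2*e2 + a1*b2*d2^2*e1*e2 - a1*b2*d1*d2*e2^2 - a1*b2*c2^2*e1*e2 + a1*b2*c2^2*d1*d2 + a1*b2*c1*c2*e2^2 - a1*b2*c1*c2*d2^2 - a1*b2^2*d2*e1*e2 + a1*b2^2*d1*d2*e2 + a1*b2^2*c2*e1*e2 - a1*b2^2*c2*d1*d2 - a1*b2^2*c1*c2*e2 + a1*b2^2*c1*c2*d2 + a1*b1*b2*d2*e2^2 - a1*b1*b2*d2^2*e2 - a1*b1*b2*c2*e2^2 + a1*b1*b2*c2*d2^2 + a1*b1*b2*c2^2*e2 - a1*b1*b2*c2^2*d2 + a1*a2*c2*d2^2*e1 - a1*a2*c2*d1*e2^2 - a1*a2*c2^2*d2*e1 + a1*a2*c2^2*d1*e2 + a1*a2*c1*d2*e2^2 - a1*a2*c1*d2^2*e2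 - a1*a2*b2*d2^2*e1 + a1*a2*b2*d1*e2^2 + a1*a2*b2*c2^2*e1 - a1*a2*b2*c2^2*d1 - a1*a2*b2*c1*e2^2 + a1*a2*b2*c1*d2^2 + a1*a2*b2^2*d2*e1 - a1*a2*b2^2*d1*e2 - a1*a2*b2^2*c2*e1 + a1*a2*b2^2*c2*d1 + a1*a2*b2^2*c1*e2 - a1*a2*b2^2*c1*d2 - a1*a2*b1*d2*e2^2 + a1*a2*b1*d2^2*e2 + a1*a2*b1*c2*e2^2 - a1*a2*b1*c2*d2^2 - a1*a2*b1*c2^2*e2 + a1*a2*b1*c2^2*d2) * hf)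

set_option maxRecDepth 4000 in
/-- Scalar form of Pascal's theorem. -/
theorem pascal_alg (a1 a2 b1 b2 c1 c2 d1 d2 e1 e2 f1 f2 s p1 p2 q1 q2 r1 r2 t1 u1 t2 u2 t3 u3
    DD1 DD2 DD3 : ℝ)
    (hD1 : DD1 = ((b1-a1)*(e2-d2)-(b2-a2)*(e1-d1))) (hD2 : DD2 = ((c1-b1)*(f2-e2)-(c2-b2)*(f1-e1))) (hD3 : DD3 = ((d1-c1)*(a2-f2)-(d2-c2)*(a1-f1)))
    (ha : a1^2 + a2^2 = s) (hb : b1^2 + b2^2 = s) (hc : c1^2 + c2^2 = s)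
    (hd : d1^2 + d2^2 = s) (he : e1^2 + e2^2 = s) (hf : f1^2 + f2^2 = s)
    (hP1 : p1 - a1 = t1*(b1-a1)) (hP2 : p2 - a2 = t1*(b2-a2))
    (hP3 : p1 - d1 = u1*(e1-d1)) (hP4 : p2 - d2 = u1*(e2-d2))
    (hQ1 : q1 - b1 = t2*(c1-b1)) (hQ2 : q2 - b2 = t2*(c2-b2))
    (hQ3 : q1 - e1 = u2*(f1-e1)) (hQ4 : q2 - e2 = u2*(f2-e2))
    (hR1 : r1 - c1 = t3*(d1-c1)) (hR2 : r2 - c2 = t3*(d2-c2))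
    (hR3 : r1 - f1 = u3*(a1-f1)) (hR4 : r2 - f2 = u3*(a2-f2)) :
    DD1 * DD2 * DD3 * ((q1-p1)*(r2-p2) - (q2-p2)*(r1-p1)) = 0 := by
  obtain ⟨XX1, hX1⟩ : ∃ x : ℝ, x = (-(e1-d1)*(a1*b2-a2*b1) + (b1-a1)*(d1*e2-d2*e1)) := ⟨_, rfl⟩
  obtain ⟨YY1, hY1⟩ : ∃ x : ℝ, x = (-(e2-d2)*(a1*b2-a2*b1) + (b2-a2)*(d1*e2-d2*e1)) := ⟨_, rfl⟩
  obtain ⟨XX2, hX2⟩ : ∃ x : ℝ, x = (-(f1-e1)*(b1*c2-b2*c1) + (c1-b1)*(e1*f2-e2*f1)) := ⟨_, rfl⟩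
  obtain ⟨YY2, hY2⟩ : ∃ x : ℝ, x = (-(f2-e2)*(b1*c2-b2*c1) + (c2-b2)*(e1*f2-e2*f1)) := ⟨_, rfl⟩
  obtain ⟨XX3, hX3⟩ : ∃ x : ℝ, x = (-(a1-f1)*(c1*d2-c2*d1) + (d1-c1)*(f1*a2-f2*a1)) := ⟨_, rfl⟩
  obtain ⟨YY3, hY3⟩ : ∃ x : ℝ, x = (-(a2-f2)*(c1*d2-c2*d1) + (d2-c2)*(f1*a2-f2*a1)) := ⟨_, rfl⟩
  have key : XX1*(YY2*DD3 - DD2*YY3) - YY1*(XX2*DD3 - DD2*XX3) + DD1*(XX2*YY3 - YY2*XX3) = 0 := by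
    rw [hX1, hY1, hX2, hY2, hX3, hY3, hD1, hD2, hD3]
    exact pascal_key a1 a2 b1 b2 c1 c2 d1 d2 e1 e2 f1 f2 s ha hb hc hd he hf
  have hsp1 : DD1 * p1 = XX1 := by
    rw [hD1, hX1]; linear_combination (-(e1-d1)*(b2-a2))*hP1 + ((e1-d1)*(b1-a1))*hP2 + ((b1-a1)*(e2-d2))*hP3 + (-(b1-a1)*(e1-d1))*hP4
  have hsp2 : DD1 * p2 = YY1 := by
    rw [hD1, hY1]; linear_combination (-(e2-d2)*(b2-a2))*hP1 + ((e2-d2)*(b1-a1))*hP2 + ((b2-a2)*(e2-d2))*hP3 + (-(b2-a2)*(e1-d1))*hP4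
  have hsq1 : DD2 * q1 = XX2 := by
    rw [hD2, hX2]; linear_combination (-(f1-e1)*(c2-b2))*hQ1 + ((f1-e1)*(c1-b1))*hQ2 + ((c1-b1)*(f2-e2))*hQ3 + (-(c1-b1)*(f1-e1))*hQ4
  have hsq2 : DD2 * q2 = YY2 := by
    rw [hD2, hY2]; linear_combination (-(f2-e2)*(c2-b2))*hQ1 + ((f2-e2)*(c1-b1))*hQ2 + ((c2-b2)*(f2-e2))*hQ3 + (-(c2-b2)*(f1-e1))*hQ4
  have hsr1 : DD3 * r1 = XX3 := by
    rw [hD3, hX3]; linear_combination (-(a1-f1)*(d2-c2))*hR1 + ((a1-f1)*(d1-c1))*hR2 + ((d1-c1)*(a2-f2))*hR3 + (-(d1-c1)*(a1-f1))*hR4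
  have hsr2 : DD3 * r2 = YY3 := by
    rw [hD3, hY3]; linear_combination (-(a2-f2)*(d2-c2))*hR1 + ((a2-f2)*(d1-c1))*hR2 + ((d2-c2)*(a2-f2))*hR3 + (-(d2-c2)*(a1-f1))*hR4
  linear_combination (YY2*DD3 - DD2*YY3)*hsp1 - (XX2*DD3 - DD2*XX3)*hsp2 + DD1*(YY3 - DD3*p2)*hsq1 + DD1*(DD3*p1 - XX3)*hsq2 + DD1*DD2*(p2-q2)*hsr1 + DD1*DD2*(q1-p1)*hsr2 + key

/-- Pascal's theorem: the opposite sides of a hexagon inscribed in a circle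
meet in three collinear points. -/
theorem pascal
    (O A B C D E F P Q R : EuclideanSpace ℝ (Fin 2)) (r : ℝ)
    (hr : 0 < r)
    (hdist : List.Pairwise Ne [A, B, C, D, E, F])
    (hA : A ∈ Metric.sphere O r) (hB : B ∈ Metric.sphere O r)
    (hC : C ∈ Metric.sphere O r) (hD : D ∈ Metric.sphere O r)
    (hE : E ∈ Metric.sphere O r) (hF : F ∈ Metric.sphere O r)
    (hP₁ : P ∈ affineSpan ℝ {A, B}) (hP₂ : P ∈ affineSpan ℝ {D, E})
    (hPne : affineSpan ℝ {A, B} ≠ affineSpan ℝ {D, E})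
    (hQ₁ : Q ∈ affineSpan ℝ {B, C}) (hQ₂ : Q ∈ affineSpan ℝ {E, F})
    (hQne : affineSpan ℝ {B, C} ≠ affineSpan ℝ {E, F})
    (hR₁ : R ∈ affineSpan ℝ {C, D}) (hR₂ : R ∈ affineSpan ℝ {F, A})
    (hRne : affineSpan ℝ {C, D} ≠ affineSpan ℝ {F, A}) :
    Collinear ℝ {P, Q, R} := by
  simp only [List.pairwise_cons] at hdist
  obtain ⟨h1, h2, h3, h4, h5, -⟩ := hdist
  have hAB : A ≠ B := h1 B (by simp)
  have hAF : A ≠ F := h1 F (by simp)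
  have hBC : B ≠ C := h2 C (by simp)
  have hCD : C ≠ D := h3 D (by simp)
  have hDE : D ≠ E := h4 E (by simp)
  have hEF : E ≠ F := h5 F (by simp)
  have sA := sphere_coord O A r hA
  have sB := sphere_coord O B r hB
  have sC := sphere_coord O C r hC
  have sD := sphere_coord O D r hD
  have sE := sphere_coord O E r hE
  have sF := sphere_coord O F r hF
  obtain ⟨t1, hP1a, hP1b⟩ := line_param hP₁
  obtain ⟨u1, hP2a, hP2b⟩ := line_param hP₂
  obtain ⟨t2, hQ1a, hQ1b⟩ := line_param hQ₁
  obtain ⟨u2, hQ2a, hQ2b⟩ := line_param hQ₂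
  obtain ⟨t3, hR1a, hR1b⟩ := line_param hR₁
  obtain ⟨u3, hR2a, hR2b⟩ := line_param hR₂
  have hd1 : (B 0 - A 0) * (E 1 - D 1) - (B 1 - A 1) * (E 0 - D 0) ≠ 0 := fun hz =>
    hPne (span_pair_eq hAB hDE hP₁ hP₂ hz)
  have hd2 : (C 0 - B 0) * (F 1 - E 1) - (C 1 - B 1) * (F 0 - E 0) ≠ 0 := fun hz =>
    hQne (span_pair_eq hBC hEF hQ₁ hQ₂ hz)
  have hd3 : (D 0 - C 0) * (A 1 - F 1) - (D 1 - C 1) * (A 0 - F 0) ≠ 0 := fun hz =>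
    hRne (span_pair_eq hCD (Ne.symm hAF) hR₁ hR₂ hz)
  have big := pascal_alg (A 0 - O 0) (A 1 - O 1) (B 0 - O 0) (B 1 - O 1) (C 0 - O 0) (C 1 - O 1)
    (D 0 - O 0) (D 1 - O 1) (E 0 - O 0) (E 1 - O 1) (F 0 - O 0) (F 1 - O 1) (r^2)
    (P 0 - O 0) (P 1 - O 1) (Q 0 - O 0) (Q 1 - O 1) (R 0 - O 0) (R 1 - O 1)
    t1 u1 t2 u2 t3 u3
    ((B 0 - A 0) * (E 1 - D 1) - (B 1 - A 1) * (E 0 - D 0))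
    ((C 0 - B 0) * (F 1 - E 1) - (C 1 - B 1) * (F 0 - E 0))
    ((D 0 - C 0) * (A 1 - F 1) - (D 1 - C 1) * (A 0 - F 0))
    (by ring) (by ring) (by ring) sA sB sC sD sE sF
    (by linear_combination hP1a) (by linear_combination hP1b)
    (by linear_combination hP2a) (by linear_combination hP2b)
    (by linear_combination hQ1a) (by linear_combination hQ1b)
    (by linear_combination hQ2a) (by linear_combination hQ2b)
    (by linear_combination hR1a) (by linear_combination hR1b)
    (by linear_combination hR2a) (by linear_combination hR2b)
  have hcrossT := (mul_eq_zero.mp big).resolve_left (mul_ne_zero (mul_ne_zero hd1 hd2) hd3)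
  have hcross : (Q 0 - P 0) * (R 1 - P 1) - (Q 1 - P 1) * (R 0 - P 0) = 0 := by
    linear_combination hcrossT
  rcases eq_or_ne Q P with hQP | hQP
  · rw [hQP, Set.insert_comm, Set.insert_idem]
    exact collinear_pair ℝ P R
  · have hvPQ : Q - P ≠ 0 := sub_ne_zero.mpr hQP
    have hdv : (Q - P) 0 * (R - P) 1 - (Q - P) 1 * (R - P) 0 = 0 := by
      simpa [PiLp.sub_apply] using hcross
    obtain ⟨k, hk⟩ := dep_of_det hvPQ hdv
    have hRmem : R ∈ affineSpan ℝ {P, Q} := by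
      have h := smul_vsub_vadd_mem_affineSpan_pair k P Q
      have hR : k • (Q - P) + P = R := by rw [← hk]; abel
      rwa [vsub_eq_sub, vadd_eq_add, hR] at h
    have hcol := collinear_insert_of_mem_affineSpan_pair hRmem
    refine hcol.subset ?_
    intro x hx
    simp only [Set.mem_insert_iff, Set.mem_singleton_iff] at hx ⊢
    tauto
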